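/- For binary potential outcomes (without any monotonicity assumption), the variance of the difference-in-means estimator τ̂(T) = n₁₁(T)/N₁ − n₀₁(T)/N₀ over the uniform distribution on subsets T of size N₁ equals (N/(N−1))·{ p₁(1−p₁)/N₁ + p₀(1−p₀)/N₀ − τ(1−τ)/N − 2N₀₁/N² }. -/

import Mathlib

open Finset

section Helpers

lemma count_one {α : Type*} [DecidableEq α] (s : Finset α) (a : α) (ha : a ∈ s)
    (k : ℕ) (hk : 1 ≤ k) :
    ((s.powersetCard k).filter (fun T => a ∈ T)).card = (s.card - 1).choose (k - 1) := by
  rw [← card_erase_of_mem ha, ← card_powersetCard]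
  refine card_bij' (fun T _ => T.erase a) (fun U _ => insert a U) ?hi ?hj ?l ?r
  case hi =>
    intro T hT
    simp only [mem_filter, mem_powersetCard] at hT
    rw [mem_powersetCard]
    exact ⟨erase_subset_erase a hT.1.1, by rw [card_erase_of_mem hT.2, hT.1.2]⟩
  case hj =>
    intro U hU
    rw [mem_powersetCard] at hU
    have haU : a ∉ U := fun h => (mem_erase.1 (hU.1 h)).1 rfl
    simp only [mem_filter, mem_powersetCard]
    refine ⟨⟨insert_subset ha (hU.1.trans (erase_subset a s)), ?_⟩, mem_insert_self a U⟩
    rw [card_insert_of_notMem haU, hU.2]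
    omega
  case l =>
    intro T hT
    simp only [mem_filter] at hT
    exact insert_erase hT.2
  case r =>
    intro U hU
    rw [mem_powersetCard] at hU
    have haU : a ∉ U := fun h => (mem_erase.1 (hU.1 h)).1 rfl
    exact erase_insert haU

lemma count_two {α : Type*} [DecidableEq α] (s : Finset α) (a b : α) (ha : a ∈ s) (hb : b ∈ s)
    (hab : a ≠ b) (k : ℕ) (hk : 2 ≤ k) :
    ((s.powersetCard k).filter (fun T => a ∈ T ∧ b ∈ T)).card = (s.card - 2).choose (k - 2) := by
  have hb' : b ∈ s.erase a := mem_erase.2 ⟨fun h => hab h.symm, hb⟩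
  have hcard : ((s.erase a).erase b).card = s.card - 2 := by
    rw [card_erase_of_mem hb', card_erase_of_mem ha]; omega
  rw [← hcard, ← card_powersetCard]
  refine card_bij' (fun T _ => (T.erase a).erase b) (fun U _ => insert a (insert b U)) ?hi ?hj ?l ?r
  case hi =>
    intro T hT
    simp only [mem_filter, mem_powersetCard] at hT
    rw [mem_powersetCard]
    have hbT : b ∈ T.erase a := mem_erase.2 ⟨fun h => hab h.symm, hT.2.2⟩
    refine ⟨erase_subset_erase b (erase_subset_erase a hT.1.1), ?_⟩
    rw [card_erase_of_mem hbT, card_erase_of_mem hT.2.1, hT.1.2]; omega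
  case hj =>
    intro U hU
    rw [mem_powersetCard] at hU
    have haU : a ∉ U := fun h => (mem_erase.1 (mem_of_mem_erase (hU.1 h))).1 rfl
    have hbU : b ∉ U := fun h => (mem_erase.1 (hU.1 h)).1 rfl
    have haU' : a ∉ insert b U := by simp [hab, haU]
    simp only [mem_filter, mem_powersetCard]
    have hsub : U ⊆ s := fun x hx => mem_of_mem_erase (mem_of_mem_erase (hU.1 hx))
    refine ⟨⟨insert_subset ha (insert_subset hb hsub), ?_⟩, mem_insert_self a _,
      mem_insert_of_mem (mem_insert_self b U)⟩
    rw [card_insert_of_notMem haU', card_insert_of_notMem hbU, hU.2]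
    omega
  case l =>
    intro T hT
    simp only [mem_filter] at hT
    have hbT : b ∈ T.erase a := mem_erase.2 ⟨fun h => hab h.symm, hT.2.2⟩
    show insert a (insert b ((T.erase a).erase b)) = T
    rw [insert_erase hbT, insert_erase hT.2.1]
  case r =>
    intro U hU
    rw [mem_powersetCard] at hU
    have haU : a ∉ U := fun h => (mem_erase.1 (mem_of_mem_erase (hU.1 h))).1 rfl
    have hbU : b ∉ U := fun h => (mem_erase.1 (hU.1 h)).1 rfl
    have haU' : a ∉ insert b U := by simp [hab, haU]
    show ((insert a (insert b U)).erase a).erase b = U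
    rw [erase_insert haU', erase_insert hbU]

lemma count_two_zero {α : Type*} [DecidableEq α] (s : Finset α) (a b : α)
    (hab : a ≠ b) :
    ((s.powersetCard 1).filter (fun T => a ∈ T ∧ b ∈ T)).card = 0 := by
  rw [card_eq_zero, filter_eq_empty_iff]
  intro T hT
  rw [mem_powersetCard] at hT
  rintro ⟨haT, hbT⟩
  have := card_le_card (insert_subset haT (singleton_subset_iff.2 hbT) : ({a, b} : Finset α) ⊆ T)
  rw [card_insert_of_notMem (by simp [hab]), card_singleton, hT.2] at this
  omega

lemma moment1 {α : Type*} [DecidableEq α] [Fintype α]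
    (S : Finset (Finset α)) (g : α → ℝ) (c1 : ℕ)
    (h1 : ∀ i : α, (S.filter (fun T => i ∈ T)).card = c1) :
    ∑ T ∈ S, ∑ i ∈ T, g i = c1 * ∑ i, g i := by
  have : ∀ T ∈ S, ∑ i ∈ T, g i = ∑ i : α, if i ∈ T then g i else 0 := by
    intro T _
    rw [sum_ite_mem, univ_inter]
  rw [sum_congr rfl this, sum_comm]
  rw [Finset.mul_sum]
  refine sum_congr rfl fun i _ => ?_
  rw [← sum_filter, sum_const, h1, nsmul_eq_mul]

lemma moment2 {α : Type*} [DecidableEq α] [Fintype α]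
    (S : Finset (Finset α)) (g : α → ℝ) (c1 c2 : ℕ)
    (h1 : ∀ i : α, (S.filter (fun T => i ∈ T)).card = c1)
    (h2 : ∀ i j : α, i ≠ j → (S.filter (fun T => i ∈ T ∧ j ∈ T)).card = c2) :
    ∑ T ∈ S, (∑ i ∈ T, g i) ^ 2
      = c1 * ∑ i, (g i) ^ 2 + c2 * ((∑ i, g i) ^ 2 - ∑ i, (g i) ^ 2) := by
  have key : ∑ T ∈ S, (∑ i ∈ T, g i) ^ 2
      = ∑ i : α, ∑ j : α, ((S.filter (fun T => i ∈ T ∧ j ∈ T)).card : ℝ) * (g i * g j) := by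
    have step : ∀ T ∈ S, (∑ i ∈ T, g i) ^ 2
        = ∑ i : α, ∑ j : α, if i ∈ T ∧ j ∈ T then g i * g j else 0 := by
      intro T _
      rw [sq, Finset.sum_mul_sum]
      rw [show (∑ i ∈ T, ∑ j ∈ T, g i * g j)
          = ∑ i ∈ T, ∑ j : α, if j ∈ T then g i * g j else 0 from
        sum_congr rfl fun i _ => by rw [sum_ite_mem, univ_inter]]
      rw [show (∑ i ∈ T, ∑ j : α, if j ∈ T then g i * g j else 0)
          = ∑ i : α, if i ∈ T then (∑ j : α, if j ∈ T then g i * g j else 0) else 0 from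
        by rw [sum_ite_mem, univ_inter]]
      refine sum_congr rfl fun i _ => ?_
      split_ifs with h
      · refine sum_congr rfl fun j _ => ?_
        simp [h]
      · rw [eq_comm, sum_eq_zero]
        intro j _
        simp [h]
    rw [sum_congr rfl step, sum_comm]
    refine sum_congr rfl fun i _ => ?_
    rw [sum_comm]
    refine sum_congr rfl fun j _ => ?_
    rw [← sum_filter, sum_const, nsmul_eq_mul]
  rw [key]
  have split : ∀ i : α, ∑ j : α, ((S.filter (fun T => i ∈ T ∧ j ∈ T)).card : ℝ) * (g i * g j)
      = (c1 : ℝ) * (g i)^2 + (c2 : ℝ) * (g i * (∑ j : α, g j) - (g i)^2) := by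
    intro i
    rw [← Finset.add_sum_erase _ _ (mem_univ i)]
    have hd : ((S.filter (fun T => i ∈ T ∧ i ∈ T)).card : ℝ) * (g i * g i) = c1 * (g i)^2 := by
      have : (S.filter (fun T => i ∈ T ∧ i ∈ T)) = S.filter (fun T => i ∈ T) := by
        apply filter_congr; intro T _; simp
      rw [this, h1, sq]
    rw [hd]
    congr 1
    have : ∀ j ∈ univ.erase i, ((S.filter (fun T => i ∈ T ∧ j ∈ T)).card : ℝ) * (g i * g j)
        = (c2 : ℝ) * (g i * g j) := by
      intro j hj
      rw [h2 i j (fun h => (mem_erase.1 hj).1 h.symm)]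
    rw [sum_congr rfl this, ← Finset.mul_sum, ← Finset.mul_sum]
    congr 1
    rw [sum_erase_eq_sub (mem_univ i), mul_sub, sq]
  rw [sum_congr rfl (fun i _ => split i), sum_add_distrib, ← Finset.mul_sum, ← Finset.mul_sum]
  congr 1
  rw [sum_sub_distrib, ← Finset.sum_mul, mul_sub, mul_sub, sq]

end Helpers

/-- Expectation of a real-valued statistic `f` of the treatment group `T`,
where `T` is a uniformly random subset of `{1,…,N}` of size `N₁`. -/
noncomputable def expE (N N₁ : ℕ) (f : Finset (Fin N) → ℝ) : ℝ :=
  (∑ T ∈ Finset.powersetCard N₁ (Finset.univ : Finset (Fin N)), f T) /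
    ((Finset.powersetCard N₁ (Finset.univ : Finset (Fin N))).card : ℝ)

/-- Variance of a real-valued statistic `f` over uniformly random subsets of size `N₁`. -/
noncomputable def varE (N N₁ : ℕ) (f : Finset (Fin N) → ℝ) : ℝ :=
  expE N N₁ (fun T => (f T - expE N N₁ f) ^ 2)

lemma expE_sub_const {N N₁ : ℕ}
    (hM : ((Finset.powersetCard N₁ (Finset.univ : Finset (Fin N))).card : ℝ) ≠ 0)
    (g : Finset (Fin N) → ℝ) (c : ℝ) :
    expE N N₁ (fun T => g T - c) = expE N N₁ g - c := by
  unfold expE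
  rw [sum_sub_distrib, sum_const, nsmul_eq_mul, sub_div, mul_div_cancel_left₀ c hM]

lemma varE_sub_const {N N₁ : ℕ}
    (hM : ((Finset.powersetCard N₁ (Finset.univ : Finset (Fin N))).card : ℝ) ≠ 0)
    (g : Finset (Fin N) → ℝ) (c : ℝ) :
    varE N N₁ (fun T => g T - c) = varE N N₁ g := by
  unfold varE
  rw [expE_sub_const hM]
  congr 1
  funext T
  ring

lemma varE_eq {N N₁ : ℕ}
    (hM : ((Finset.powersetCard N₁ (Finset.univ : Finset (Fin N))).card : ℝ) ≠ 0)
    (f : Finset (Fin N) → ℝ) :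
    varE N N₁ f = expE N N₁ (fun T => f T ^ 2) - (expE N N₁ f) ^ 2 := by
  unfold varE expE
  set M := ((Finset.powersetCard N₁ (Finset.univ : Finset (Fin N))).card : ℝ)
  set s := ∑ T ∈ Finset.powersetCard N₁ (Finset.univ : Finset (Fin N)), f T with hs
  have : ∀ T ∈ Finset.powersetCard N₁ (Finset.univ : Finset (Fin N)),
      (f T - s / M) ^ 2 = f T ^ 2 - 2 * (s / M) * f T + (s / M) ^ 2 := fun T _ => by ring
  rw [sum_congr rfl this]
  rw [sum_add_distrib, sum_sub_distrib, sum_const, nsmul_eq_mul, ← Finset.mul_sum, ← hs]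
  have hM' : M = ((Finset.powersetCard N₁ (Finset.univ : Finset (Fin N))).card : ℝ) := rfl
  rw [← hM']
  field_simp
  ring

set_option maxHeartbeats 4000000 in
/-- Without monotonicity, the variance of `τ̂(T) = n₁₁(T)/N₁ − n₀₁(T)/N₀` equals
`(N/(N−1)) { p₁(1−p₁)/N₁ + p₀(1−p₀)/N₀ − τ(1−τ)/N − 2N₀₁/N² }`. -/
theorem stmt_10 (N N₁ N₀ : ℕ) (hN : 2 ≤ N) (hN₁ : 1 ≤ N₁) (hN₁' : N₁ ≤ N - 1)
    (hN₀ : N₀ = N - N₁)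
    (Y1 Y0 : Fin N → ℕ) (hY1 : ∀ i, Y1 i ≤ 1) (hY0 : ∀ i, Y0 i ≤ 1)
    (N11 N10 N01 N00 : ℕ)
    (hN11 : N11 = (Finset.univ.filter (fun i => Y1 i = 1 ∧ Y0 i = 1)).card)
    (hN10 : N10 = (Finset.univ.filter (fun i => Y1 i = 1 ∧ Y0 i = 0)).card)
    (hN01 : N01 = (Finset.univ.filter (fun i => Y1 i = 0 ∧ Y0 i = 1)).card)
    (hN00 : N00 = (Finset.univ.filter (fun i => Y1 i = 0 ∧ Y0 i = 0)).card)
    (p1 p0 τ : ℝ) (hp1 : p1 = ((N11 : ℝ) + N10) / N) (hp0 : p0 = ((N11 : ℝ) + N01) / N)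
    (hτ : τ = ((N10 : ℝ) - N01) / N)
    (n11 n01 : Finset (Fin N) → ℕ)
    (hn11 : ∀ T, n11 T = (T.filter (fun i => Y1 i = 1)).card)
    (hn01 : ∀ T, n01 T = (Tᶜ.filter (fun i => Y0 i = 1)).card) :
    varE N N₁ (fun T => (n11 T : ℝ) / N₁ - (n01 T : ℝ) / N₀)
      = (N : ℝ) / (N - 1) *
        (p1 * (1 - p1) / N₁ + p0 * (1 - p0) / N₀ - τ * (1 - τ) / N
          - 2 * N01 / (N : ℝ) ^ 2) := by
  clear hN00
  have hN₁N : N₁ < N := by omega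
  have hN₀1 : 1 ≤ N₀ := by omega
  -- basic nonzero facts
  have hk0 : (N₁ : ℝ) ≠ 0 := Nat.cast_ne_zero.2 (by omega)
  have hn0 : (N : ℝ) ≠ 0 := Nat.cast_ne_zero.2 (by omega)
  have hN2 : (2 : ℝ) ≤ (N : ℝ) := by exact_mod_cast hN
  have hn1 : (N : ℝ) - 1 ≠ 0 := by linarith
  have hu0 : (N₀ : ℝ) ≠ 0 := Nat.cast_ne_zero.2 (by omega)
  have hN₀R : (N₀ : ℝ) = (N : ℝ) - (N₁ : ℝ) := by
    subst hN₀; push_cast [Nat.cast_sub hN₁N.le]; ring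
  have hM : ((Finset.powersetCard N₁ (Finset.univ : Finset (Fin N))).card : ℝ) ≠ 0 := by
    rw [card_powersetCard, card_univ, Fintype.card_fin]
    exact Nat.cast_ne_zero.2 (Nat.choose_pos hN₁N.le).ne'
  -- total counts
  set A := ∑ i : Fin N, Y1 i with hA
  set B := ∑ i : Fin N, Y0 i with hB
  set C := ∑ i : Fin N, Y1 i * Y0 i with hC
  -- the per-unit coefficient
  set a : Fin N → ℝ := fun i => (Y1 i : ℝ) / N₁ + (Y0 i : ℝ) / N₀ with ha
  -- rewrite the statistic
  have hf : (fun T : Finset (Fin N) => (n11 T : ℝ) / N₁ - (n01 T : ℝ) / N₀)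
      = fun T => (∑ i ∈ T, a i) - (B : ℝ) / N₀ := by
    funext T
    have e1 : n11 T = ∑ i ∈ T, Y1 i := by
      rw [hn11, card_filter]
      exact sum_congr rfl fun i _ => by have := hY1 i; split_ifs <;> omega
    have e2 : n01 T + ∑ i ∈ T, Y0 i = B := by
      rw [hn01, card_filter]
      rw [show (∑ i ∈ Tᶜ, if Y0 i = 1 then 1 else 0) = ∑ i ∈ Tᶜ, Y0 i from
        sum_congr rfl fun i _ => by have := hY0 i; split_ifs <;> omega]
      rw [add_comm]
      exact Finset.sum_add_sum_compl T Y0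
    have e2' : (n01 T : ℝ) = (B : ℝ) - ∑ i ∈ T, (Y0 i : ℝ) := by
      have h := congrArg (fun x : ℕ => (x : ℝ)) e2
      push_cast at h
      linarith
    have e1' : (n11 T : ℝ) = ∑ i ∈ T, (Y1 i : ℝ) := by
      rw [e1]; push_cast; rfl
    rw [e1', e2', ha]
    rw [sum_add_distrib, ← sum_div, ← sum_div]
    ring
  rw [hf, varE_sub_const hM, varE_eq hM]
  -- counting constants
  have h1 : ∀ i : Fin N,
      (((Finset.powersetCard N₁ (Finset.univ : Finset (Fin N)))).filter
        (fun T => i ∈ T)).card = (N - 1).choose (N₁ - 1) := by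
    intro i
    rw [count_one _ _ (mem_univ i) _ hN₁, card_univ, Fintype.card_fin]
  obtain ⟨c2, h2, hc2⟩ : ∃ c2 : ℕ,
      (∀ i j : Fin N, i ≠ j →
        (((Finset.powersetCard N₁ (Finset.univ : Finset (Fin N)))).filter
          (fun T => i ∈ T ∧ j ∈ T)).card = c2) ∧
      ((N : ℝ) - 1) * c2 = ((N - 1).choose (N₁ - 1) : ℝ) * ((N₁ : ℝ) - 1) := by
    rcases eq_or_lt_of_le hN₁ with h | h
    · refine ⟨0, fun i j hij => ?_, ?_⟩
      · rw [← h]; exact count_two_zero _ _ _ hij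
      · rw [← h]; norm_num
    · have h2le : 2 ≤ N₁ := h
      refine ⟨(N - 2).choose (N₁ - 2), fun i j hij => ?_, ?_⟩
      · rw [count_two _ _ _ (mem_univ i) (mem_univ j) hij _ h2le, card_univ, Fintype.card_fin]
      · have key := Nat.add_one_mul_choose_eq (N - 2) (N₁ - 2)
        have e1 : N - 2 + 1 = N - 1 := by omega
        have e2 : N₁ - 2 + 1 = N₁ - 1 := by omega
        rw [e1, e2] at key
        have keyR : ((N - 1 : ℕ) : ℝ) * ((N - 2).choose (N₁ - 2) : ℝ)
            = ((N - 1).choose (N₁ - 1) : ℝ) * ((N₁ - 1 : ℕ) : ℝ) := by exact_mod_cast key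
        rw [Nat.cast_sub (by omega : 1 ≤ N), Nat.cast_sub hN₁] at keyR
        push_cast at keyR ⊢
        linarith [keyR]
  unfold expE
  rw [moment1 _ _ _ h1, moment2 _ _ _ _ h1 h2, card_powersetCard, card_univ, Fintype.card_fin]
  -- the choose identities, cast to ℝ
  have hc1 : (N : ℝ) * ((N - 1).choose (N₁ - 1) : ℝ) = (N.choose N₁ : ℝ) * (N₁ : ℝ) := by
    have key := Nat.add_one_mul_choose_eq (N - 1) (N₁ - 1)
    have e1 : N - 1 + 1 = N := by omega
    have e2 : N₁ - 1 + 1 = N₁ := by omega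
    rw [e1, e2] at key
    exact_mod_cast key
  -- values of the sums
  have cA : (A : ℝ) = ∑ i : Fin N, (Y1 i : ℝ) := by rw [hA]; push_cast; rfl
  have cB : (B : ℝ) = ∑ i : Fin N, (Y0 i : ℝ) := by rw [hB]; push_cast; rfl
  have cC : (C : ℝ) = ∑ i : Fin N, (Y1 i : ℝ) * (Y0 i : ℝ) := by rw [hC]; push_cast; rfl
  have hSa : ∑ i : Fin N, a i = (A : ℝ) / N₁ + (B : ℝ) / N₀ := by
    rw [ha, cA, cB, sum_add_distrib, ← sum_div, ← sum_div]
  have hSa2 : ∑ i : Fin N, (a i) ^ 2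
      = (A : ℝ) / (N₁ : ℝ) ^ 2 + (B : ℝ) / (N₀ : ℝ) ^ 2 + 2 * (C : ℝ) / ((N₁ : ℝ) * N₀) := by
    have step : ∀ i : Fin N, (a i) ^ 2
        = (Y1 i : ℝ) / (N₁ : ℝ) ^ 2 + (Y0 i : ℝ) / (N₀ : ℝ) ^ 2
          + 2 * ((Y1 i : ℝ) * (Y0 i : ℝ)) / ((N₁ : ℝ) * N₀) := by
      intro i
      rcases Nat.le_one_iff_eq_zero_or_eq_one.mp (hY1 i) with h | h <;>
        rcases Nat.le_one_iff_eq_zero_or_eq_one.mp (hY0 i) with h' | h' <;>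
          simp only [ha, h, h'] <;> push_cast <;> field_simp <;> ring
    rw [sum_congr rfl (fun i _ => step i), sum_add_distrib, sum_add_distrib,
      ← sum_div, ← sum_div, cA, cB]
    congr 1
    rw [cC, ← sum_div, ← Finset.mul_sum]
  -- counts in terms of A, B, C
  have hAe : N11 + N10 = A := by
    rw [hN11, hN10, card_filter, card_filter, ← sum_add_distrib, hA]
    exact sum_congr rfl fun i _ => by have := hY1 i; have := hY0 i; split_ifs <;> omega
  have hBe : N11 + N01 = B := by
    rw [hN11, hN01, card_filter, card_filter, ← sum_add_distrib, hB]
    exact sum_congr rfl fun i _ => by have := hY1 i; have := hY0 i; split_ifs <;> omega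
  have hCe : N11 = C := by
    rw [hN11, card_filter, hC]
    refine sum_congr rfl fun i _ => ?_
    rcases Nat.le_one_iff_eq_zero_or_eq_one.mp (hY1 i) with h | h <;>
      rcases Nat.le_one_iff_eq_zero_or_eq_one.mp (hY0 i) with h' | h' <;> simp [h, h']
  have hp1' : p1 = (A : ℝ) / N := by rw [hp1, ← hAe]; push_cast; ring_nf
  have hp0' : p0 = (B : ℝ) / N := by rw [hp0, ← hBe]; push_cast; ring_nf
  have hτ' : τ = ((A : ℝ) - B) / N := by
    rw [hτ, ← hAe, ← hBe]; push_cast; ring_nf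
  have hN01' : (N01 : ℝ) = (B : ℝ) - C := by
    have : N11 + N01 = B := hBe
    have h := congrArg (fun x : ℕ => (x : ℝ)) this
    push_cast at h
    rw [← hCe]
    linarith
  rw [hSa, hSa2, hp1', hp0', hτ', hN01', hN₀R]
  -- eliminate the choose values
  set m := (N.choose N₁ : ℝ) with hm
  have hm0 : m ≠ 0 := by
    rw [hm]; exact Nat.cast_ne_zero.2 (Nat.choose_pos hN₁N.le).ne'
  set q1 := ((N - 1).choose (N₁ - 1) : ℝ) with hq1
  have hq1v : q1 = m * (N₁ : ℝ) / N := by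
    rw [eq_div_iff hn0]; linarith [hc1]
  have hq2v : (c2 : ℝ) = m * (N₁ : ℝ) * ((N₁ : ℝ) - 1) / ((N : ℝ) * ((N : ℝ) - 1)) := by
    rw [eq_div_iff (mul_ne_zero hn0 hn1)]
    have : ((N : ℝ) - 1) * (c2 : ℝ) = q1 * ((N₁ : ℝ) - 1) := hc2
    rw [hq1v] at this
    field_simp at this
    linarith
  rw [hq1v, hq2v]
  have hnk0 : (N : ℝ) - (N₁ : ℝ) ≠ 0 := by rw [← hN₀R]; exact hu0
  field_simp
  ring
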